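/- Let n ∈ ℕ and let c, d : Fin n → ℝ both be monotone nondecreasing, where c k is the fixed arrival (completion) time of position k and d j is the due date of order j. Then the earliest-due-date assignment is optimal: for every permutation σ of Fin n, ∑_{k} max(0, c k − d k) ≤ ∑_{k} max(0, c k − d(σ k)). -/

import Mathlib

/-- Exchange lemma: with `c1 ≤ c2` and `d1 ≤ d2`, matching them in order gives
no more tardiness than matching them crosswise. -/
lemma edd_exchange (c1 c2 d1 d2 : ℝ) (hc : c1 ≤ c2) (hd : d1 ≤ d2) :
    max 0 (c1 - d1) + max 0 (c2 - d2) ≤ max 0 (c1 - d2) + max 0 (c2 - d1) := by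
  simp only [max_def]
  split_ifs <;> linarith

/-- Earliest-due-date assignment is optimal: with fixed nondecreasing arrival
times `c` and nondecreasing due dates `d`, matching earlier arrivals with
earlier due dates minimizes the total tardiness over all bijective
assignments. -/
theorem edd_assignment_minimizes_total_tardiness
    (n : ℕ) (c d : Fin n → ℝ) (hc : Monotone c) (hd : Monotone d)
    (σ : Equiv.Perm (Fin n)) :
    (∑ k : Fin n, max 0 (c k - d k)) ≤
      (∑ k : Fin n, max 0 (c k - d (σ k))) := by
  suffices H : ∀ m (σ : Equiv.Perm (Fin n)), σ.support.card = m →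
      (∑ k : Fin n, max 0 (c k - d k)) ≤ (∑ k : Fin n, max 0 (c k - d (σ k))) from
    H _ σ rfl
  intro m
  induction m using Nat.strong_induction_on with
  | _ m ih =>
    intro σ hm
    by_cases h1 : σ = 1
    · simp [h1]
    · have hne : σ.support.Nonempty := by
        rw [Finset.nonempty_iff_ne_empty, Ne, Equiv.Perm.support_eq_empty_iff]
        exact h1
      set k := σ.support.min' hne with hk
      have hkmem : k ∈ σ.support := σ.support.min'_mem hne
      have hkσ : σ k ≠ k := Equiv.Perm.mem_support.mp hkmem
      set j := σ⁻¹ k with hj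
      have hjmem : j ∈ σ.support := by
        rw [Equiv.Perm.mem_support, hj]
        intro h
        have h' : k = σ⁻¹ k := (σ.apply_symm_apply k).symm.trans h
        exact hkσ ((congrArg σ h').trans (σ.apply_symm_apply k))
      have hσj : σ j = k := by simp [hj]
      have hkj : k < j := by
        rcases lt_or_eq_of_le (σ.support.min'_le j hjmem) with h | h
        · exact h
        · exact absurd (by rw [← h] at hσj; exact hσj) hkσ
      have hkσk : k < σ k :=
        lt_of_le_of_ne (σ.support.min'_le (σ k) (Equiv.Perm.apply_mem_support.mpr hkmem))
          (Ne.symm hkσ)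
      set τ : Equiv.Perm (Fin n) := σ * Equiv.swap k j with hτ
      have hτk : τ k = k := by simp [hτ, Equiv.swap_apply_left, hσj]
      have hτj : τ j = σ k := by simp [hτ, Equiv.swap_apply_right]
      have hτother : ∀ i, i ≠ k → i ≠ j → τ i = σ i := by
        intro i h1 h2
        simp [hτ, Equiv.swap_apply_of_ne_of_ne h1 h2]
      -- support of τ is strictly smaller
      have hsub : τ.support ⊆ σ.support.erase k := by
        intro i hi
        have hiτ : τ i ≠ i := Equiv.Perm.mem_support.mp hi
        have hik : i ≠ k := fun h => hiτ (h ▸ hτk)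
        refine Finset.mem_erase.mpr ⟨hik, Equiv.Perm.mem_support.mpr ?_⟩
        by_cases hij : i = j
        · subst hij; rw [hσj]; exact ne_of_lt hkj
        · rw [← hτother i hik hij]; exact hiτ
      have hcard : τ.support.card < m := by
        calc τ.support.card ≤ (σ.support.erase k).card := Finset.card_le_card hsub
          _ < σ.support.card := Finset.card_erase_lt_of_mem hkmem
          _ = m := hm
      have IH := ih τ.support.card hcard τ rfl
      refine IH.trans ?_
      -- now show the τ-sum is ≤ the σ-sum
      have hkjne : j ≠ k := Ne.symm (ne_of_lt hkj)
      have hsplit : ∀ g : Fin n → ℝ, ∑ i : Fin n, g i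
          = g k + g j + ∑ i ∈ (Finset.univ.erase k).erase j, g i := by
        intro g
        rw [← Finset.sum_erase_add Finset.univ g (Finset.mem_univ k),
          ← Finset.sum_erase_add (Finset.univ.erase k) g
            (Finset.mem_erase.mpr ⟨hkjne, Finset.mem_univ j⟩)]
        ring
      rw [hsplit (fun i => max 0 (c i - d (τ i))), hsplit (fun i => max 0 (c i - d (σ i)))]
      have hrest : ∑ i ∈ (Finset.univ.erase k).erase j, max 0 (c i - d (τ i))
          = ∑ i ∈ (Finset.univ.erase k).erase j, max 0 (c i - d (σ i)) := by
        refine Finset.sum_congr rfl fun i hi => ?_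
        obtain ⟨hij, hik, -⟩ : i ≠ j ∧ i ≠ k ∧ True := by
          simp only [Finset.mem_erase, Finset.mem_univ] at hi
          exact ⟨hi.1, hi.2.1, trivial⟩
        rw [hτother i hik hij]
      rw [hrest]
      have hmain : max 0 (c k - d (τ k)) + max 0 (c j - d (τ j))
          ≤ max 0 (c k - d (σ k)) + max 0 (c j - d (σ j)) := by
        rw [hτk, hτj, hσj]
        exact edd_exchange (c k) (c j) (d k) (d (σ k)) (hc hkj.le) (hd hkσk.le)
      linarith
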